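/- For every integer r ≥ 3 and every integer s ≥ 2, setting n = r²−r−1, the clock network N_n({1,r}) is not s-solvable. -/

import Mathlib

/-- The valuation of the circuit, defined for all of ℕ by strong recursion. -/
def clockVal (r s : ℕ) (f : ℕ → ({ j // j ∈ ({1, r} : Finset ℕ) } → ZMod s) → ZMod s)
    (c : Fin r → ZMod s) : ℕ → ZMod s
  | k =>
    if h : k < r then c ⟨k, h⟩
    else if h0 : k = 0 then 0
    else f k (fun j => clockVal r s f c (k - max (j : ℕ) 1))
  termination_by k => k
  decreasing_by
    exact Nat.sub_lt (Nat.pos_of_ne_zero h0) (lt_of_lt_of_le one_pos (le_max_right _ _))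

theorem clockVal_input (r s : ℕ) (f : ℕ → ({ j // j ∈ ({1, r} : Finset ℕ) } → ZMod s) → ZMod s)
    (c : Fin r → ZMod s) (k : ℕ) (h : k < r) :
    clockVal r s f c k = c ⟨k, h⟩ := by
  rw [clockVal]; rw [dif_pos h]

theorem clockVal_step (r s : ℕ) (f : ℕ → ({ j // j ∈ ({1, r} : Finset ℕ) } → ZMod s) → ZMod s)
    (c : Fin r → ZMod s) (k : ℕ) (hr : 1 ≤ r) (h : r ≤ k) :
    clockVal r s f c k = f k (fun j => clockVal r s f c (k - (j : ℕ))) := by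
  rw [clockVal]
  rw [dif_neg (by omega), dif_neg (by omega)]
  congr 1
  funext j
  have hj : (j : ℕ) = 1 ∨ (j : ℕ) = r := by
    rcases Finset.mem_insert.mp j.2 with h' | h'
    · exact Or.inl h'
    · exact Or.inr (Finset.mem_singleton.mp h')
  have : max (j : ℕ) 1 = (j : ℕ) := by omega
  rw [this]

/-- The purely combinatorial core: no "difference set" `D` with the given closure
properties exists when `n = r^2 - r - 1`. -/
theorem clock_comb (r n : ℕ) (hr : 3 ≤ r) (hn : n + 1 = (r - 1) * r)
    (D : ℕ → Prop)
    (hin : ∀ m, m < r → D m → m = 0)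
    (hout : ∀ m, n ≤ m → m < n + r → D m → m = n)
    (hDn : D n)
    (hfwd : ∀ m, m < n → D m → D (m + r) ∨ D (m + r - 1))
    (hbwd : ∀ m, r ≤ m → D m → D (m - 1) ∨ D (m - r)) : False := by
  -- arithmetic facts
  have h1 : (r - 1) * r = r * r - r := by
    rw [Nat.sub_mul, one_mul]
  have h2 : (r - 2) * r = r * r - 2 * r := by
    rw [Nat.sub_mul]
  have h3 : 3 * r ≤ r * r := Nat.mul_le_mul_right r hr
  have F2 : n = (r - 2) * r + (r - 1) := by
    rw [h2]; omega
  have e2 : n % r = r - 1 := by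
    rw [F2, mul_comm, Nat.mul_add_mod]
    exact Nat.mod_eq_of_lt (by omega)
  have claim1 : ∀ d q ρ m, m = q * r + ρ → r ≤ q + d → 1 ≤ ρ → ρ + 2 ≤ r →
      r ≤ q + ρ + 1 → m < n + r → ¬ D m := by
    intro d
    induction d with
    | zero =>
      intro q ρ m hm hq _ _ _ hrange _
      have h5 : q * r ≤ m := hm ▸ Nat.le_add_right _ _
      have h6 : r * r ≤ q * r := Nat.mul_le_mul_right r (by omega)
      omega
    | succ d ih =>
      intro q ρ m hm hq hρ1 hρ2 hqρ hrange hD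
      by_cases hcase : n ≤ m
      · have hmn : m = n := hout m hcase hrange hD
        have e1 : m % r = ρ := by
          rw [hm, mul_comm, Nat.mul_add_mod]
          exact Nat.mod_eq_of_lt (by omega)
        rw [hmn, e2] at e1
        omega
      · push_neg at hcase
        have hq1 : (q + 1) * r = q * r + r := by ring
        rcases hfwd m hcase hD with h | h
        · exact ih (q + 1) ρ (m + r) (by omega) (by omega) hρ1 hρ2 (by omega)
            (by omega) h
        · by_cases hρ : 2 ≤ ρ
          · exact ih (q + 1) (ρ - 1) (m + r - 1) (by omega) (by omega) (by omega)
              (by omega) (by omega) (by omega) h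
          · -- ρ = 1, so m + r - 1 = (q+1)*r lands in the output zone
            have hρ1' : ρ = 1 := by omega
            have hub : (r - 1) * r ≤ (q + 1) * r :=
              Nat.mul_le_mul_right r (by omega)
            have hne : n ≤ m + r - 1 := by omega
            have := hout (m + r - 1) hne (by omega) h
            -- m + r - 1 = (q+1)*r, so n ≡ 0 mod r, contradiction with e2
            have e3 : (m + r - 1) % r = 0 := by
              have : m + r - 1 = (q + 1) * r := by omega
              rw [this, Nat.mul_mod_left]
            rw [this, e2] at e3
            omega
  have desc : ∀ q, q ≤ r - 2 → D (q * r + (r - 1)) → False := by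
    intro q
    induction q with
    | zero =>
      intro _ hD
      have : r - 1 = 0 := hin (r - 1) (by omega) (by simpa using hD)
      omega
    | succ q ih =>
      intro hq hD
      have hq1 : (q + 1) * r = q * r + r := by ring
      have hB : q * r + r ≤ (r - 2) * r := by
        rw [← hq1]
        exact Nat.mul_le_mul_right r (by omega)
      have hrm : r ≤ (q + 1) * r + (r - 1) := by omega
      rcases hbwd _ hrm hD with h | h
      · exact claim1 r (q + 1) (r - 2) ((q + 1) * r + (r - 1) - 1)
          (by omega) (by omega) (by omega) (by omega) (by omega) (by omega) h
      · have e : (q + 1) * r + (r - 1) - r = q * r + (r - 1) := by omega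
        exact ih (by omega) (e ▸ h)
  exact desc (r - 2) le_rfl (F2 ▸ hDn)

section Analysis

variable {r s : ℕ} (f : ℕ → ({ j // j ∈ ({1, r} : Finset ℕ) } → ZMod s) → ZMod s)

/-- If two valuations agree on a window of `r` consecutive nodes, they agree from
then on. -/
theorem clockVal_det (hr : 3 ≤ r) (c c' : Fin r → ZMod s) (m : ℕ)
    (hw : ∀ j : Fin r, clockVal r s f c (m + (j : ℕ)) = clockVal r s f c' (m + (j : ℕ))) :
    ∀ k, m ≤ k → clockVal r s f c k = clockVal r s f c' k := by
  intro k
  induction k using Nat.strong_induction_on with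
  | _ k ih =>
    intro hk
    by_cases hlt : k < m + r
    · have := hw ⟨k - m, by omega⟩
      simpa [Nat.add_sub_cancel' hk] using this
    · push_neg at hlt
      rw [clockVal_step r s f c k (by omega) (by omega),
        clockVal_step r s f c' k (by omega) (by omega)]
      congr 1
      funext j
      have hj : (j : ℕ) = 1 ∨ (j : ℕ) = r := by
        rcases Finset.mem_insert.mp j.2 with h' | h'
        · exact Or.inl h'
        · exact Or.inr (Finset.mem_singleton.mp h')
      exact ih (k - (j : ℕ)) (by omega) (by omega)

variable {n : ℕ}

/-- Injectivity of the window map. -/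
theorem window_inj (hr : 3 ≤ r)
    (hOut : ∀ (c : Fin r → ZMod s) (i : Fin r), clockVal r s f c (n + (i : ℕ)) = c i)
    (m : ℕ) (hm : m ≤ n) (c c' : Fin r → ZMod s)
    (hw : ∀ j : Fin r, clockVal r s f c (m + (j : ℕ)) = clockVal r s f c' (m + (j : ℕ))) :
    c = c' := by
  funext i
  have hd := clockVal_det f hr c c' m hw (n + (i : ℕ)) (by omega)
  rw [hOut c i, hOut c' i] at hd
  exact hd

/-- Surjectivity of the window map. -/
theorem window_surj (hr : 3 ≤ r) (hs : 2 ≤ s)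
    (hOut : ∀ (c : Fin r → ZMod s) (i : Fin r), clockVal r s f c (n + (i : ℕ)) = c i)
    (m : ℕ) (hm : m ≤ n) :
    Function.Surjective (fun (c : Fin r → ZMod s) (j : Fin r) =>
      clockVal r s f c (m + (j : ℕ))) := by
  haveI : NeZero s := ⟨by omega⟩
  have hinj : Function.Injective (fun (c : Fin r → ZMod s) (j : Fin r) =>
      clockVal r s f c (m + (j : ℕ))) :=
    fun c c' h => window_inj f hr hOut m hm c c' (fun j => congrFun h j)
  exact Finite.surjective_of_injective hinj

/-- Injectivity of each gate in its "old" argument. -/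
theorem gate_inj (hr : 3 ≤ r) (hs : 2 ≤ s)
    (hOut : ∀ (c : Fin r → ZMod s) (i : Fin r), clockVal r s f c (n + (i : ℕ)) = c i)
    (m : ℕ) (hm : m < n) (a a' b : ZMod s)
    (h : f (m + r) (fun j => if (j : ℕ) = 1 then b else a)
       = f (m + r) (fun j => if (j : ℕ) = 1 then b else a')) :
    a = a' := by
  obtain ⟨c, hc⟩ := window_surj f hr hs hOut m (by omega)
    (fun j : Fin r => if (j : ℕ) = 0 then a else if (j : ℕ) = r - 1 then b else 0)
  obtain ⟨c', hc'⟩ := window_surj f hr hs hOut m (by omega)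
    (fun j : Fin r => if (j : ℕ) = 0 then a' else if (j : ℕ) = r - 1 then b else 0)
  have hca : clockVal r s f c m = a := by
    have := congrFun hc (⟨0, by omega⟩ : Fin r)
    simpa using this
  have hca' : clockVal r s f c' m = a' := by
    have := congrFun hc' (⟨0, by omega⟩ : Fin r)
    simpa using this
  have hcb : clockVal r s f c (m + (r - 1)) = b := by
    have := congrFun hc (⟨r - 1, by omega⟩ : Fin r)
    simp only at this
    rw [this, if_neg (by omega)]
    simp
  have hcb' : clockVal r s f c' (m + (r - 1)) = b := by
    have := congrFun hc' (⟨r - 1, by omega⟩ : Fin r)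
    simp only at this
    rw [this, if_neg (by omega)]
    simp
  have htail : ∀ j : Fin r, 1 ≤ (j : ℕ) →
      clockVal r s f c (m + (j : ℕ)) = clockVal r s f c' (m + (j : ℕ)) := by
    intro j hj
    have t1 := congrFun hc j
    have t2 := congrFun hc' j
    simp only at t1 t2
    rw [t1, t2, if_neg (show ¬ (j : ℕ) = 0 by omega),
      if_neg (show ¬ (j : ℕ) = 0 by omega)]
  have hk : clockVal r s f c (m + r)
      = f (m + r) (fun j => if (j : ℕ) = 1 then b else a) := by
    rw [clockVal_step r s f c (m + r) (by omega) (by omega)]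
    congr 1
    funext j
    rcases Finset.mem_insert.mp j.2 with h' | h'
    · rw [if_pos h', h']
      rw [show m + r - 1 = m + (r - 1) by omega, hcb]
    · have h'' := Finset.mem_singleton.mp h'
      rw [if_neg (by omega), h'']
      rw [show m + r - r = m by omega, hca]
  have hk' : clockVal r s f c' (m + r)
      = f (m + r) (fun j => if (j : ℕ) = 1 then b else a') := by
    rw [clockVal_step r s f c' (m + r) (by omega) (by omega)]
    congr 1
    funext j
    rcases Finset.mem_insert.mp j.2 with h' | h'
    · rw [if_pos h', h']
      rw [show m + r - 1 = m + (r - 1) by omega, hcb']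
    · have h'' := Finset.mem_singleton.mp h'
      rw [if_neg (by omega), h'']
      rw [show m + r - r = m by omega, hca']
  have heq : clockVal r s f c (m + r) = clockVal r s f c' (m + r) := by
    rw [hk, hk', h]
  have hwin : ∀ j : Fin r,
      clockVal r s f c (m + 1 + (j : ℕ)) = clockVal r s f c' (m + 1 + (j : ℕ)) := by
    intro j
    by_cases hj : (j : ℕ) = r - 1
    · rw [show m + 1 + (j : ℕ) = m + r by omega]
      exact heq
    · have h1 : m + 1 + (j : ℕ) = m + ((⟨(j : ℕ) + 1, by omega⟩ : Fin r) : ℕ) := by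
        simp only [Fin.val_mk]
        omega
      rw [h1]
      exact htail ⟨(j : ℕ) + 1, by omega⟩ (by simp)
  have hcc : c = c' := window_inj f hr hOut (m + 1) (by omega) c c' hwin
  rw [← hca, ← hca', hcc]

end Analysis

/-- The clock network `N_n(R)` (with `r = max R`) is `s`-solvable: there is a circuit,
given by a function `f k` for each non-input node (node `k` receives the values at
nodes `k - j` for `j ∈ R`), such that for every input `c ∈ (ℤ_s)^r` the valuation `X`
(determined by `X i = c i` for the `r` input nodes and by
`X k = f k (fun j => X (k - j))` for the remaining nodes, all 0-indexed) satisfies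
`X (n + i) = c i` at the `r` output nodes. -/
def Solvable (R : Finset ℕ) (r n s : ℕ) : Prop :=
  ∃ f : ℕ → ({ j // j ∈ R } → ZMod s) → ZMod s,
    ∀ c : Fin r → ZMod s, ∀ X : ℕ → ZMod s,
      (∀ i : Fin r, X (i : ℕ) = c i) →
      (∀ k : ℕ, r ≤ k → k < n + r → X k = f k fun j => X (k - (j : ℕ))) →
      ∀ i : Fin r, X (n + (i : ℕ)) = c i

/-- For every `r ≥ 3` and `s ≥ 2`, with `n = r² - r - 1`, the clock network
`N_n({1,r})` is not `s`-solvable. -/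
theorem clock1r_not_solvable (r s : ℕ) (hr : 3 ≤ r) (hs : 2 ≤ s) :
    ¬ Solvable {1, r} r (r ^ 2 - r - 1) s := by
  rintro ⟨f, hf⟩
  set n := r ^ 2 - r - 1 with hndef
  haveI : NeZero r := ⟨by omega⟩
  haveI : Fact (1 < s) := ⟨by omega⟩
  have hrr : r ^ 2 = r * r := by ring
  have h3r : 3 * r ≤ r * r := Nat.mul_le_mul_right r hr
  have hsub : (r - 1) * r = r * r - r := by rw [Nat.sub_mul, one_mul]
  have hn : n + 1 = (r - 1) * r := by
    rw [hsub]; omega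
  have hOut : ∀ (c : Fin r → ZMod s) (i : Fin r),
      clockVal r s f c (n + (i : ℕ)) = c i := by
    intro c i
    refine hf c (clockVal r s f c) ?_ ?_ i
    · intro i'
      rw [clockVal_input r s f c _ i'.isLt]
    · intro k hk _
      exact clockVal_step r s f c k (by omega) hk
  -- the two inputs
  set c0 : Fin r → ZMod s := fun _ => 0 with hc0
  set c1 : Fin r → ZMod s := fun i => if i = 0 then 1 else 0 with hc1
  set D : ℕ → Prop := fun m => clockVal r s f c1 m ≠ clockVal r s f c0 m with hD
  have h10 : (1 : ZMod s) ≠ 0 := one_ne_zero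
  have hin : ∀ m, m < r → D m → m = 0 := by
    intro m hm hDm
    by_contra hm0
    apply hDm
    rw [clockVal_input r s f c1 m hm, clockVal_input r s f c0 m hm, hc1, hc0]
    simp only
    rw [if_neg (by simp [Fin.ext_iff]; omega)]
  have houtD : ∀ m, n ≤ m → m < n + r → D m → m = n := by
    intro m hm1 hm2 hDm
    by_contra hmn
    apply hDm
    have hi : m = n + ((⟨m - n, by omega⟩ : Fin r) : ℕ) := by
      simp only [Fin.val_mk]; omega
    rw [hi, hOut c1 _, hOut c0 _, hc1, hc0]
    simp only
    rw [if_neg (by simp [Fin.ext_iff]; omega)]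
  have hDn : D n := by
    have h0 : n = n + ((0 : Fin r) : ℕ) := by simp
    rw [hD]
    simp only
    rw [h0, hOut c1 _, hOut c0 _, hc1, hc0]
    simp
  have hbwd : ∀ m, r ≤ m → D m → D (m - 1) ∨ D (m - r) := by
    intro m hm hDm
    by_contra hcon
    push_neg at hcon
    obtain ⟨e1, e2⟩ := hcon
    simp only [hD, ne_eq, not_not] at e1 e2
    apply hDm
    rw [clockVal_step r s f c1 m (by omega) hm, clockVal_step r s f c0 m (by omega) hm]
    congr 1
    funext j
    rcases Finset.mem_insert.mp j.2 with h' | h'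
    · rw [h']; exact e1
    · rw [Finset.mem_singleton.mp h']; exact e2
  have hfwd : ∀ m, m < n → D m → D (m + r) ∨ D (m + r - 1) := by
    intro m hm hDm
    by_contra hcon
    push_neg at hcon
    obtain ⟨e1, e2⟩ := hcon
    simp only [hD, ne_eq, not_not] at e1 e2
    have hk1 : clockVal r s f c1 (m + r)
        = f (m + r) (fun j => if (j : ℕ) = 1 then clockVal r s f c1 (m + r - 1)
            else clockVal r s f c1 m) := by
      rw [clockVal_step r s f c1 (m + r) (by omega) (by omega)]
      congr 1
      funext j
      rcases Finset.mem_insert.mp j.2 with h' | h'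
      · rw [if_pos h', h']
      · have hjr := Finset.mem_singleton.mp h'
        rw [if_neg (by omega), hjr, show m + r - r = m by omega]
    have hk0 : clockVal r s f c0 (m + r)
        = f (m + r) (fun j => if (j : ℕ) = 1 then clockVal r s f c1 (m + r - 1)
            else clockVal r s f c0 m) := by
      rw [clockVal_step r s f c0 (m + r) (by omega) (by omega)]
      congr 1
      funext j
      rcases Finset.mem_insert.mp j.2 with h' | h'
      · rw [if_pos h', h']
        exact e2.symm
      · have hjr := Finset.mem_singleton.mp h'
        rw [if_neg (by omega), hjr, show m + r - r = m by omega]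
    have hfe : f (m + r) (fun j => if (j : ℕ) = 1 then clockVal r s f c1 (m + r - 1)
            else clockVal r s f c1 m)
        = f (m + r) (fun j => if (j : ℕ) = 1 then clockVal r s f c1 (m + r - 1)
            else clockVal r s f c0 m) := by
      rw [← hk1, ← hk0]
      exact e1
    exact hDm (gate_inj f hr hs hOut m hm _ _ _ hfe)
  exact clock_comb r n hr hn D hin houtD hDn hfwd hbwd
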